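/- Assume J positive, strictly decreasing, and 0 < h < ∑_{n=1}^{N-1} J(n). For every configuration σ ∉ {-1, +1}, the stability level V_σ = min_{η : H(η) < H(σ)} Φ(σ,η) - H(σ) is strictly smaller than V_{-1} = max_{0 ≤ k ≤ N} H(L^(k)) - H(-1). -/

import Mathlib

open Finset

/-- Long-range Ising Hamiltonian with free boundary conditions on {0,...,N-1}:
`H(σ) = -∑_{i<j} J(|i-j|) σᵢ σⱼ - h ∑ᵢ σᵢ`. -/
noncomputable def H (N : ℕ) (J : ℕ → ℝ) (h : ℝ) (σ : Fin N → ℝ) : ℝ :=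
  -(∑ i : Fin N, ∑ j : Fin N,
      if (i : ℕ) < (j : ℕ) then J (Nat.dist (i : ℕ) (j : ℕ)) * σ i * σ j else 0)
    - h * ∑ i : Fin N, σ i

/-- A spin configuration takes values in {-1, +1}. -/
def IsConfig {N : ℕ} (σ : Fin N → ℝ) : Prop := ∀ i, σ i = 1 ∨ σ i = -1

/-- The configuration `L^(k)`: +1 on the first k sites, -1 elsewhere. -/
def Lconf (N k : ℕ) : Fin N → ℝ := fun i => if (i : ℕ) < k then 1 else -1

/-- The configuration `R^(k)`: +1 on the last k sites, -1 elsewhere. -/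
def Rconf (N k : ℕ) : Fin N → ℝ := fun i => if N - k ≤ (i : ℕ) then 1 else -1

/-- Two configurations related by a single spin flip. -/
def IsFlip {N : ℕ} (a b : Fin N → ℝ) : Prop := ∃ i, b = Function.update a i (-(a i))

/-- A path of configurations joining σ to η, changing one spin at a time. -/
def IsPathFrom {N : ℕ} (γ : List (Fin N → ℝ)) (σ η : Fin N → ℝ) : Prop :=
  γ ≠ [] ∧ γ.head? = some σ ∧ γ.getLast? = some η ∧ (∀ τ ∈ γ, IsConfig τ) ∧
    List.Chain' IsFlip γ

/-- Communication height: minimal over paths from σ to η of the maximal energy along the path. -/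
noncomputable def Phi (N : ℕ) (J : ℕ → ℝ) (h : ℝ) (σ η : Fin N → ℝ) : ℝ :=
  sInf {x | ∃ γ : List (Fin N → ℝ), IsPathFrom γ σ η ∧
    x = (γ.map (H N J h)).foldr max (H N J h σ)}

/-- The stability level of `σ`: `V_σ = min_{η : H(η) < H(σ)} Φ(σ,η) - H(σ)`. -/
noncomputable def V (N : ℕ) (J : ℕ → ℝ) (h : ℝ) (σ : Fin N → ℝ) : ℝ :=
  sInf {x | ∃ η : Fin N → ℝ, IsConfig η ∧ H N J h η < H N J h σ ∧ x = Phi N J h σ η}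
    - H N J h σ


lemma le_foldr_max (b : ℝ) (l : List ℝ) : b ≤ l.foldr max b := by
  induction l with
  | nil => simp
  | cons a t ih => exact le_trans ih (le_max_right a _)

lemma foldr_max_lt (c b : ℝ) (l : List ℝ) (hb : b < c) (hl : ∀ a ∈ l, a < c) :
    l.foldr max b < c := by
  induction l with
  | nil => simpa
  | cons a t ih =>
      simp only [List.foldr_cons]
      exact max_lt (hl a (by simp)) (ih (fun x hx => hl x (by simp [hx])))

lemma double_split {N : ℕ} (f : Fin N → Fin N → ℝ) (i : Fin N) (hdiag : f i i = 0) :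
    ∑ a : Fin N, ∑ b : Fin N, f a b =
      (∑ b ∈ univ.erase i, f i b) + (∑ a ∈ univ.erase i, f a i) +
        ∑ a ∈ univ.erase i, ∑ b ∈ univ.erase i, f a b := by
  rw [← Finset.add_sum_erase _ (fun a => ∑ b, f a b) (mem_univ i)]
  rw [← Finset.add_sum_erase _ (f i) (mem_univ i), hdiag]
  have h2 : ∑ a ∈ univ.erase i, ∑ b, f a b
      = ∑ a ∈ univ.erase i, (f a i + ∑ b ∈ univ.erase i, f a b) := by
    refine Finset.sum_congr rfl (fun a _ => ?_)
    rw [Finset.add_sum_erase _ (f a) (mem_univ i)]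
  rw [h2, Finset.sum_add_distrib]
  ring

lemma H_update (N : ℕ) (J : ℕ → ℝ) (h : ℝ) (τ : Fin N → ℝ) (i : Fin N) (x : ℝ) :
    H N J h (Function.update τ i x)
      = H N J h τ + (τ i - x) *
          ((∑ j ∈ univ.erase i, J (Nat.dist (i : ℕ) (j : ℕ)) * τ j) + h) := by
  classical
  set u := Function.update τ i x with hu
  have hui : u i = x := Function.update_self i x τ
  have hun : ∀ j : Fin N, j ≠ i → u j = τ j := fun j hj => Function.update_of_ne hj x τ
  set F : (Fin N → ℝ) → Fin N → Fin N → ℝ := fun σ a b =>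
    if (a : ℕ) < (b : ℕ) then J (Nat.dist (a : ℕ) (b : ℕ)) * σ a * σ b else 0 with hF
  have hdiag : ∀ σ : Fin N → ℝ, F σ i i = 0 := by intro σ; simp [hF]
  have hsum : ∀ σ : Fin N → ℝ, ∑ j : Fin N, σ j = σ i + ∑ j ∈ univ.erase i, σ j :=
    fun σ => (Finset.add_sum_erase _ σ (mem_univ i)).symm
  have key : (∑ a : Fin N, ∑ b : Fin N, F u a b) - (∑ a : Fin N, ∑ b : Fin N, F τ a b)
      = (x - τ i) * ∑ j ∈ univ.erase i, J (Nat.dist (i : ℕ) (j : ℕ)) * τ j := by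
    rw [double_split (F u) i (hdiag u), double_split (F τ) i (hdiag τ)]
    have hdd : ∑ a ∈ univ.erase i, ∑ b ∈ univ.erase i, F u a b
        = ∑ a ∈ univ.erase i, ∑ b ∈ univ.erase i, F τ a b := by
      refine Finset.sum_congr rfl (fun a ha => Finset.sum_congr rfl (fun b hb => ?_))
      simp [hF, hun a (mem_erase.mp ha).1, hun b (mem_erase.mp hb).1]
    have hA : ∑ b ∈ univ.erase i, F u i b - ∑ b ∈ univ.erase i, F τ i b
        = (x - τ i) * ∑ b ∈ univ.erase i,
            (if (i : ℕ) < (b : ℕ) then J (Nat.dist (i : ℕ) (b : ℕ)) else 0) * τ b := by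
      rw [← Finset.sum_sub_distrib, Finset.mul_sum]
      refine Finset.sum_congr rfl (fun b hb => ?_)
      have hbi := (mem_erase.mp hb).1
      simp only [hF, hui, hun b hbi]
      split <;> ring
    have hB : ∑ a ∈ univ.erase i, F u a i - ∑ a ∈ univ.erase i, F τ a i
        = (x - τ i) * ∑ a ∈ univ.erase i,
            (if (a : ℕ) < (i : ℕ) then J (Nat.dist (a : ℕ) (i : ℕ)) else 0) * τ a := by
      rw [← Finset.sum_sub_distrib, Finset.mul_sum]
      refine Finset.sum_congr rfl (fun a ha => ?_)
      have hai := (mem_erase.mp ha).1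
      simp only [hF, hui, hun a hai]
      split <;> ring
    have hC : (∑ b ∈ univ.erase i,
            (if (i : ℕ) < (b : ℕ) then J (Nat.dist (i : ℕ) (b : ℕ)) else 0) * τ b)
        + (∑ a ∈ univ.erase i,
            (if (a : ℕ) < (i : ℕ) then J (Nat.dist (a : ℕ) (i : ℕ)) else 0) * τ a)
        = ∑ j ∈ univ.erase i, J (Nat.dist (i : ℕ) (j : ℕ)) * τ j := by
      rw [← Finset.sum_add_distrib]
      refine Finset.sum_congr rfl (fun j hj => ?_)
      have hji : j ≠ i := (mem_erase.mp hj).1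
      have hvj : (j : ℕ) ≠ (i : ℕ) := fun hc => hji (Fin.ext hc)
      rcases lt_or_gt_of_ne hvj with hlt | hgt
      · rw [if_neg (by omega), if_pos hlt, Nat.dist_comm]
        ring
      · rw [if_pos hgt, if_neg (by omega)]
        ring
    calc (∑ b ∈ univ.erase i, F u i b) + (∑ a ∈ univ.erase i, F u a i) +
          (∑ a ∈ univ.erase i, ∑ b ∈ univ.erase i, F u a b)
        - ((∑ b ∈ univ.erase i, F τ i b) + (∑ a ∈ univ.erase i, F τ a i) +
          ∑ a ∈ univ.erase i, ∑ b ∈ univ.erase i, F τ a b)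
        = (∑ b ∈ univ.erase i, F u i b - ∑ b ∈ univ.erase i, F τ i b)
          + (∑ a ∈ univ.erase i, F u a i - ∑ a ∈ univ.erase i, F τ a i) := by rw [hdd]; ring
      _ = (x - τ i) * ∑ j ∈ univ.erase i, J (Nat.dist (i : ℕ) (j : ℕ)) * τ j := by
          rw [hA, hB, ← mul_add, hC]
  have hsum2 : (∑ j : Fin N, u j) - (∑ j : Fin N, τ j) = x - τ i := by
    rw [hsum u, hsum τ, hui]
    have : ∑ j ∈ univ.erase i, u j = ∑ j ∈ univ.erase i, τ j :=
      Finset.sum_congr rfl (fun j hj => hun j (mem_erase.mp hj).1)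
    rw [this]; ring
  have hH : ∀ σ : Fin N → ℝ, H N J h σ = -(∑ a : Fin N, ∑ b : Fin N, F σ a b) - h * ∑ j, σ j :=
    fun σ => rfl
  rw [hH, hH]
  linear_combination (-1 : ℝ) * key + (-h) * hsum2


variable (N : ℕ) (J : ℕ → ℝ)

lemma Icc_sum_eq_range (m : ℕ) : ∑ n ∈ Icc 1 m, J n = ∑ k ∈ range m, J (k + 1) := by
  rw [← Finset.Ico_add_one_right_eq_Icc, Finset.sum_Ico_eq_sum_range]
  norm_num
  exact Finset.sum_congr rfl (fun k _ => by rw [Nat.add_comm])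

lemma Bsum (i : Fin N) :
    ∑ j ∈ univ.erase i, J (Nat.dist (i : ℕ) (j : ℕ)) * (if (j : ℕ) < (i : ℕ) then (1:ℝ) else -1)
      = (∑ n ∈ Icc 1 (i : ℕ), J n) - ∑ n ∈ Icc 1 (N - 1 - (i : ℕ)), J n := by
  classical
  set G : ℕ → ℝ := fun j => if j = (i : ℕ) then 0
    else J (Nat.dist (i : ℕ) j) * (if j < (i : ℕ) then 1 else -1) with hG
  have h1 : ∑ j ∈ univ.erase i, J (Nat.dist (i : ℕ) (j : ℕ)) *
      (if (j : ℕ) < (i : ℕ) then (1:ℝ) else -1) = ∑ j : Fin N, G (j : ℕ) := by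
    rw [← Finset.add_sum_erase _ (fun j : Fin N => G (j : ℕ)) (mem_univ i)]
    have : G (i : ℕ) = 0 := by simp [hG]
    rw [this, zero_add]
    refine (Finset.sum_congr rfl (fun j hj => ?_)).symm
    have hji : j ≠ i := (mem_erase.mp hj).1
    have : (j : ℕ) ≠ (i : ℕ) := fun hc => hji (Fin.ext hc)
    simp [hG, this]
  rw [h1, Fin.sum_univ_eq_sum_range (fun j => G j) N]
  have hiN : (i : ℕ) < N := i.isLt
  rw [Finset.range_eq_Ico, ← Finset.sum_Ico_consecutive G (Nat.zero_le (i : ℕ)) (le_of_lt hiN)]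
  rw [Finset.sum_eq_sum_Ico_succ_bot hiN G]
  rw [Finset.sum_Ico_eq_sum_range G ((i : ℕ) + 1) N]
  have hGi : G (i : ℕ) = 0 := by simp [hG]
  have hA : ∑ j ∈ Ico 0 (i : ℕ), G j = ∑ n ∈ Icc 1 (i : ℕ), J n := by
    rw [← Finset.range_eq_Ico, Icc_sum_eq_range]
    rw [← Finset.sum_range_reflect (fun k => J (k + 1)) (i : ℕ)]
    refine Finset.sum_congr rfl (fun j hj => ?_)
    have hji : j < (i : ℕ) := mem_range.mp hj
    have h2 : G j = J ((i : ℕ) - j) := by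
      have : Nat.dist (i : ℕ) j = (i : ℕ) - j := by
        rw [Nat.dist_comm]; exact Nat.dist_eq_sub_of_le (le_of_lt hji)
      simp [hG, this, Nat.ne_of_lt hji, hji]
    rw [h2]
    congr 1
    omega
  have hB : ∑ k ∈ range (N - ((i : ℕ) + 1)), G ((i : ℕ) + 1 + k)
      = -(∑ n ∈ Icc 1 (N - 1 - (i : ℕ)), J n) := by
    rw [Icc_sum_eq_range, ← Finset.sum_neg_distrib]
    have hc : N - ((i : ℕ) + 1) = N - 1 - (i : ℕ) := by omega
    rw [hc]
    refine Finset.sum_congr rfl (fun k _ => ?_)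
    have h2 : Nat.dist (i : ℕ) ((i : ℕ) + 1 + k) = k + 1 := by
      rw [Nat.dist_eq_sub_of_le (by omega)]; omega
    have h3 : ¬ ((i : ℕ) + 1 + k = (i : ℕ)) := by omega
    have h4 : ¬ ((i : ℕ) + 1 + k < (i : ℕ)) := by omega
    simp [hG, h2, h3, h4]
  rw [hA, hGi, hB]
  ring


lemma sum_le_sup_prefix (f : ℕ → ℝ) (hf : ∀ k, f (k + 1) ≤ f k) :
    ∀ (n : ℕ) (s : Finset ℕ), s ⊆ range n →
      ∑ k ∈ s, f k ≤ (range (n + 1)).sup' (by simp) (fun m => ∑ k ∈ range m, f k) := by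
  have hanti : Antitone f := antitone_nat_of_succ_le hf
  intro n
  induction n with
  | zero =>
      intro s hs
      have hs0 : s = ∅ := Finset.subset_empty.mp (by simpa using hs)
      subst hs0
      simpa using Finset.le_sup' (fun m => ∑ k ∈ range m, f k) (by simp : 0 ∈ range 1)
  | succ n ih =>
      intro s hs
      have hsup : (range (n + 1)).sup' (by simp) (fun m => ∑ k ∈ range m, f k)
          ≤ (range (n + 2)).sup' (by simp) (fun m => ∑ k ∈ range m, f k) := by
        refine Finset.sup'_le _ _ (fun m hm => ?_)
        have hm2 := Finset.mem_range.mp hm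
        exact Finset.le_sup' (fun m => ∑ k ∈ range m, f k) (Finset.mem_range.mpr (by omega))
      by_cases hfn : 0 < f n
      · have h1 : ∑ k ∈ s, f k ≤ ∑ k ∈ range (n + 1), f k := by
          refine Finset.sum_le_sum_of_subset_of_nonneg hs (fun k hk _ => ?_)
          have : f n ≤ f k := hanti (by simp at hk; omega)
          linarith
        exact h1.trans (Finset.le_sup' (fun m => ∑ k ∈ range m, f k)
          (Finset.mem_range.mpr (by omega : n + 1 < n + 2)))
      · push_neg at hfn
        have h1 : ∑ k ∈ s, f k ≤ ∑ k ∈ s.erase n, f k := by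
          by_cases hn : n ∈ s
          · rw [← Finset.add_sum_erase _ f hn]; linarith
          · rw [Finset.erase_eq_of_notMem hn]
        have h2 : s.erase n ⊆ range n := by
          intro k hk
          have h3 := (mem_erase.mp hk).1
          have h4 := hs (mem_erase.mp hk).2
          simp at h4 ⊢
          omega
        exact h1.trans ((ih _ h2).trans hsup)


noncomputable def ell (N : ℕ) (J : ℕ → ℝ) (h : ℝ) (m : ℕ) : ℝ :=
  2 * ((∑ n ∈ Icc 1 (N - 1 - m), J n) - (∑ n ∈ Icc 1 m, J n) - h)

noncomputable def GapBound (N : ℕ) (J : ℕ → ℝ) (h : ℝ) : ℝ :=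
  (range (N + 1)).sup' (by simp) (fun m => ∑ k ∈ range m, ell N J h k)

lemma ell_succ_le (N : ℕ) (J : ℕ → ℝ) (h : ℝ) (hpos : ∀ n, 1 ≤ n → 0 < J n) (m : ℕ) :
    ell N J h (m + 1) ≤ ell N J h m := by
  have h1 : ∑ n ∈ Icc 1 (N - 1 - (m + 1)), J n ≤ ∑ n ∈ Icc 1 (N - 1 - m), J n := by
    refine Finset.sum_le_sum_of_subset_of_nonneg ?_ (fun n hn _ => le_of_lt (hpos n (mem_Icc.mp hn).1))
    apply Finset.Icc_subset_Icc_right; omega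
  have h2 : ∑ n ∈ Icc 1 m, J n ≤ ∑ n ∈ Icc 1 (m + 1), J n := by
    refine Finset.sum_le_sum_of_subset_of_nonneg ?_ (fun n hn _ => le_of_lt (hpos n (mem_Icc.mp hn).1))
    apply Finset.Icc_subset_Icc_right; omega
  unfold ell
  linarith

lemma main_path (N : ℕ) (J : ℕ → ℝ) (h : ℝ)
    (hpos : ∀ n, 1 ≤ n → 0 < J n) (hG0 : 0 < GapBound N J h)
    (σ : Fin N → ℝ) (hσ : IsConfig σ)
    (e : ℕ → Fin N) (C : ℕ → Fin N → ℝ) (r : ℕ → Fin N → ℝ) (p : Fin N) (hp : σ p = 1)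
    (hC0 : C 0 = σ)
    (hr1 : ∀ m, m < N → r m (e m) = -1)
    (hcr : ∀ m, m < N → ∀ j, (C m j = 1 ∧ r m j = 1) ∨ (C m j = σ j ∧ r m j = -1))
    (hstep1 : ∀ m, m < N → σ (e m) = -1 → C (m + 1) = Function.update (C m) (e m) 1)
    (hstep2 : ∀ m, m < N → σ (e m) = 1 → C (m + 1) = C m)
    (hCN : IsConfig (C N))
    (hF : ∀ m, m < N → ∑ j ∈ univ.erase (e m), J (Nat.dist ((e m : Fin N) : ℕ) (j : ℕ)) * r m j
          = (∑ n ∈ Icc 1 m, J n) - ∑ n ∈ Icc 1 (N - 1 - m), J n)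
    (hw : ∀ m, m < N → σ (e m) = -1 → (∀ k, k < m → σ (e k) = 1) → r m p = -1 ∧ p ≠ e m) :
    ∃ γ, IsPathFrom γ σ (C N) ∧ ∀ a ∈ γ, H N J h a < H N J h σ + GapBound N J h := by
  classical
  set G := GapBound N J h with hG
  set T : ℕ → ℝ := fun m => ∑ k ∈ (range m).filter (fun k => σ (e k) = -1), ell N J h k with hT
  have hTG : ∀ m, m ≤ N → T m ≤ G := by
    intro m hm
    have hsub : (range m).filter (fun k => σ (e k) = -1) ⊆ range N :=
      (Finset.filter_subset _ _).trans (Finset.range_subset_range.mpr hm)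
    exact sum_le_sup_prefix (ell N J h) (ell_succ_le N J h hpos) N _ hsub
  have hconf : ∀ m, m ≤ N → IsConfig (C m) := by
    intro m hm
    rcases eq_or_lt_of_le hm with hm' | hm'
    · rw [hm']; exact hCN
    · intro j
      rcases hcr m hm' j with ⟨h1, _⟩ | ⟨h1, _⟩
      · exact Or.inl h1
      · rw [h1]; exact hσ j
  have key : ∀ m, m ≤ N → ∃ γ, IsPathFrom γ σ (C m) ∧
      (∀ a ∈ γ, H N J h a < H N J h σ + G) ∧
      H N J h (C m) ≤ H N J h σ + T m ∧
      ((∃ k, k < m ∧ σ (e k) = -1) → H N J h (C m) < H N J h σ + T m) := by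
    intro m
    induction m with
    | zero =>
        intro _
        refine ⟨[σ], ⟨by simp, rfl, by rw [hC0]; rfl, by simpa using hσ, List.isChain_singleton σ⟩,
          ?_, ?_, ?_⟩
        · intro a ha
          simp at ha
          rw [ha]
          linarith
        · rw [hC0]
          simp [hT]
        · rintro ⟨k, hk, -⟩; omega
    | succ m ih =>
        intro hm1
        have hmN : m < N := by omega
        obtain ⟨γ, hpath, hbound, hle, hstrict⟩ := ih (by omega)
        obtain ⟨hne, hhead, hlast, hcfg, hchain⟩ := hpath
        rcases hσ (e m) with hplus | hminus
        · -- no flip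
          have hCC : C (m + 1) = C m := hstep2 m hmN hplus
          have hTT : T (m + 1) = T m := by
            simp only [hT, Finset.range_add_one, Finset.filter_insert]
            rw [if_neg (by rw [hplus]; norm_num)]
          refine ⟨γ, ⟨hne, hhead, by rw [hCC]; exact hlast, hcfg, hchain⟩, hbound, ?_, ?_⟩
          · rw [hCC, hTT]; exact hle
          · rintro ⟨k, hk, hkm⟩
            rw [hCC, hTT]
            refine hstrict ⟨k, ?_, hkm⟩
            rcases Nat.lt_succ_iff_lt_or_eq.mp hk with h' | h'
            · exact h'
            · exfalso; rw [h'] at hkm; rw [hplus] at hkm; norm_num at hkm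
        · -- flip at e m
          set i : Fin N := e m with hi
          have hCupd : C (m + 1) = Function.update (C m) i 1 := hstep1 m hmN hminus
          have hCmi : C m i = -1 := by
            rcases hcr m hmN i with ⟨_, hri⟩ | ⟨hci, _⟩
            · exfalso; rw [hr1 m hmN] at hri; norm_num at hri
            · rw [hci]; exact hminus
          set F : ℝ := ∑ j ∈ univ.erase i, J (Nat.dist (i : ℕ) (j : ℕ)) * C m j with hFdef
          have hHnew : H N J h (C (m + 1)) = H N J h (C m) + (-2) * (F + h) := by
            rw [hCupd, H_update, hCmi, ← hFdef]
            ring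
          have hterm : ∀ j ∈ univ.erase i,
              0 ≤ J (Nat.dist (i : ℕ) (j : ℕ)) * (C m j - r m j) := by
            intro j hj
            have hji : j ≠ i := (mem_erase.mp hj).1
            have hd : 1 ≤ Nat.dist (i : ℕ) (j : ℕ) := by
              have : (i : ℕ) ≠ (j : ℕ) := fun hc => hji (Fin.ext hc.symm)
              have := Nat.dist_pos_of_ne this
              omega
            have hJ : 0 ≤ J (Nat.dist (i : ℕ) (j : ℕ)) := le_of_lt (hpos _ hd)
            rcases hcr m hmN j with ⟨h1, h2⟩ | ⟨h1, h2⟩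
            · rw [h1, h2]; simp
            · rw [h1, h2]
              rcases hσ j with h3 | h3 <;> rw [h3] <;> nlinarith
          have hFge : (∑ n ∈ Icc 1 m, J n) - ∑ n ∈ Icc 1 (N - 1 - m), J n ≤ F := by
            have h1 : 0 ≤ ∑ j ∈ univ.erase i, J (Nat.dist (i : ℕ) (j : ℕ)) * (C m j - r m j) :=
              Finset.sum_nonneg hterm
            have h2 : ∑ j ∈ univ.erase i, J (Nat.dist (i : ℕ) (j : ℕ)) * (C m j - r m j)
                = F - ∑ j ∈ univ.erase i, J (Nat.dist (i : ℕ) (j : ℕ)) * r m j := by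
              rw [hFdef, ← Finset.sum_sub_distrib]
              exact Finset.sum_congr rfl (fun j _ => by ring)
            rw [h2, hF m hmN] at h1
            linarith
          have hcost_le : (-2) * (F + h) ≤ ell N J h m := by
            unfold ell
            linarith
          have hTT : T (m + 1) = T m + ell N J h m := by
            simp only [hT, Finset.range_add_one, Finset.filter_insert]
            rw [if_pos hminus, Finset.sum_insert (by simp)]
            ring
          -- strict bound on the new energy
          have hnewstrict : H N J h (C (m + 1)) < H N J h σ + T (m + 1) := by
            by_cases hex : ∃ k, k < m ∧ σ (e k) = -1
            · have := hstrict hex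
              rw [hHnew, hTT]
              linarith
            · have hnone : ∀ k, k < m → σ (e k) = 1 := by
                intro k hk
                rcases hσ (e k) with h1 | h1
                · exact h1
                · exact absurd ⟨k, hk, h1⟩ hex
              obtain ⟨hrp, hpne⟩ := hw m hmN hminus hnone
              have hpmem : p ∈ univ.erase i := mem_erase.mpr ⟨hpne, mem_univ p⟩
              have hCmp : C m p = 1 := by
                rcases hcr m hmN p with ⟨h1, _⟩ | ⟨h1, _⟩
                · exact h1
                · rw [h1]; exact hp
              have hdp : 1 ≤ Nat.dist (i : ℕ) (p : ℕ) := by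
                have : (i : ℕ) ≠ (p : ℕ) := fun hc => hpne (Fin.ext hc.symm)
                have := Nat.dist_pos_of_ne this
                omega
              have hJp : 0 < J (Nat.dist (i : ℕ) (p : ℕ)) := hpos _ hdp
              have hsingle : J (Nat.dist (i : ℕ) (p : ℕ)) * (C m p - r m p)
                  ≤ ∑ j ∈ univ.erase i, J (Nat.dist (i : ℕ) (j : ℕ)) * (C m j - r m j) :=
                Finset.single_le_sum hterm hpmem
              have h2 : ∑ j ∈ univ.erase i, J (Nat.dist (i : ℕ) (j : ℕ)) * (C m j - r m j)
                  = F - ∑ j ∈ univ.erase i, J (Nat.dist (i : ℕ) (j : ℕ)) * r m j := by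
                rw [hFdef, ← Finset.sum_sub_distrib]
                exact Finset.sum_congr rfl (fun j _ => by ring)
              rw [h2, hF m hmN] at hsingle
              rw [hCmp, hrp] at hsingle
              have hcost_lt : (-2) * (F + h) < ell N J h m := by
                unfold ell
                nlinarith
              rw [hHnew, hTT]
              linarith
          have hnewG : H N J h (C (m + 1)) < H N J h σ + G :=
            lt_of_lt_of_le hnewstrict (by have := hTG (m + 1) hm1; linarith)
          refine ⟨γ ++ [C (m + 1)], ⟨List.append_ne_nil_of_left_ne_nil hne _,
            by rw [List.head?_append_of_ne_nil _ hne]; exact hhead,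
            List.getLast?_concat, ?_, ?_⟩, ?_, le_of_lt hnewstrict,
            fun _ => hnewstrict⟩
          · intro τ hτ
            rcases List.mem_append.mp hτ with h1 | h1
            · exact hcfg τ h1
            · simp at h1
              rw [h1]
              exact hconf (m + 1) hm1
          · rw [List.Chain', List.isChain_append]
            refine ⟨hchain, List.isChain_singleton _, ?_⟩
            intro x hx y hy
            rw [hlast] at hx
            simp at hx hy
            rw [← hx, ← hy]
            exact ⟨i, by rw [hCupd, hCmi]; norm_num⟩
          · intro a ha
            rcases List.mem_append.mp ha with h1 | h1
            · exact hbound a h1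
            · simp at h1
              rw [h1]
              exact hnewG
  obtain ⟨γ, hpath, hbound, -, -⟩ := key N (le_refl N)
  exact ⟨γ, hpath, hbound⟩

lemma Lconf_zero (N : ℕ) : Lconf N 0 = fun _ => -1 := by
  funext i; simp [Lconf]

lemma H_Lconf (N : ℕ) (J : ℕ → ℝ) (h : ℝ) :
    ∀ m, m ≤ N → H N J h (Lconf N m)
      = H N J h (fun _ => -1) + ∑ k ∈ range m, ell N J h k := by
  intro m
  induction m with
  | zero => intro _; rw [Lconf_zero]; simp
  | succ m ih =>
      intro hm1
      have hmN : m < N := by omega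
      set i : Fin N := ⟨m, hmN⟩ with hi
      have hupd : Lconf N (m + 1) = Function.update (Lconf N m) i 1 := by
        funext j
        by_cases hj : j = i
        · subst hj
          rw [Function.update_self]
          simp [Lconf, hi]
        · rw [Function.update_of_ne hj]
          have hvj : (j : ℕ) ≠ m := fun hc => hj (Fin.ext (by simp [hi, hc]))
          simp only [Lconf]
          by_cases h2 : (j : ℕ) < m
          · rw [if_pos (by omega), if_pos h2]
          · rw [if_neg (by omega), if_neg h2]
      have hLi : Lconf N m i = -1 := by
        simp [Lconf, hi]
      have hFL : ∑ j ∈ univ.erase i, J (Nat.dist (i : ℕ) (j : ℕ)) * Lconf N m j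
          = (∑ n ∈ Icc 1 m, J n) - ∑ n ∈ Icc 1 (N - 1 - m), J n := by
        have hb := Bsum N J i
        have hval : (i : ℕ) = m := rfl
        rw [hval] at hb
        rw [← hb]
        refine Finset.sum_congr rfl (fun j _ => ?_)
        simp [Lconf, hval]
      rw [hupd, H_update, hLi, hFL, ih (by omega), Finset.sum_range_succ]
      unfold ell
      ring
lemma Gamma_eq (N : ℕ) (J : ℕ → ℝ) (h : ℝ) :
    (Finset.range (N + 1)).sup' (by simp) (fun k => H N J h (Lconf N k))
      = H N J h (fun _ => -1) + GapBound N J h := by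
  apply le_antisymm
  · refine Finset.sup'_le _ _ (fun k hk => ?_)
    rw [H_Lconf N J h k (by simpa using Nat.lt_succ_iff.mp (mem_range.mp hk))]
    have := Finset.le_sup' (fun m => ∑ k ∈ range m, ell N J h k) hk
    unfold GapBound
    linarith [this]
  · obtain ⟨m, hm, hmax⟩ := Finset.exists_mem_eq_sup' (by simp : (range (N+1)).Nonempty)
      (fun m => ∑ k ∈ range m, ell N J h k)
    have h1 : GapBound N J h = ∑ k ∈ range m, ell N J h k := hmax
    rw [h1, ← H_Lconf N J h m (by simpa using Nat.lt_succ_iff.mp (mem_range.mp hm))]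
    exact Finset.le_sup' (fun k => H N J h (Lconf N k)) hm

lemma GapBound_pos (N : ℕ) (J : ℕ → ℝ) (h : ℝ) (hN : 2 ≤ N)
    (hh1 : h < ∑ n ∈ Finset.Icc 1 (N - 1), J n) : 0 < GapBound N J h := by
  have h1 : ∑ k ∈ range 1, ell N J h k = ell N J h 0 := by simp
  have h2 : ell N J h 0 = 2 * ((∑ n ∈ Icc 1 (N - 1), J n) - h) := by
    unfold ell
    simp
  have h3 := Finset.le_sup' (fun m => ∑ k ∈ range m, ell N J h k)
    (Finset.mem_range.mpr (by omega : 1 < N + 1))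
  unfold GapBound
  rw [h1, h2] at h3
  linarith

lemma H_plus_lt (N : ℕ) (J : ℕ → ℝ) (h : ℝ)
    (hpos : ∀ n, 1 ≤ n → 0 < J n) (hh0 : 0 < h)
    (σ : Fin N → ℝ) (hσ : IsConfig σ) (i0 : Fin N) (hi0 : σ i0 = -1) :
    H N J h (fun _ => 1) < H N J h σ := by
  have hQ : ∑ i : Fin N, ∑ j : Fin N,
      (if (i : ℕ) < (j : ℕ) then J (Nat.dist (i : ℕ) (j : ℕ)) * σ i * σ j else 0)
      ≤ ∑ i : Fin N, ∑ j : Fin N,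
      (if (i : ℕ) < (j : ℕ) then J (Nat.dist (i : ℕ) (j : ℕ)) * (1:ℝ) * 1 else 0) := by
    refine Finset.sum_le_sum (fun i _ => Finset.sum_le_sum (fun j _ => ?_))
    by_cases hij : (i : ℕ) < (j : ℕ)
    · rw [if_pos hij, if_pos hij]
      have hd : 1 ≤ Nat.dist (i : ℕ) (j : ℕ) := by
        have := Nat.dist_pos_of_ne (by omega : (i:ℕ) ≠ (j:ℕ))
        omega
      have hJ : 0 ≤ J (Nat.dist (i : ℕ) (j : ℕ)) := le_of_lt (hpos _ hd)
      rcases hσ i with h1 | h1 <;> rcases hσ j with h2 | h2 <;> rw [h1, h2] <;> nlinarith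
    · rw [if_neg hij, if_neg hij]
  have hS : (2:ℝ) ≤ ∑ i : Fin N, ((1:ℝ) - σ i) := by
    have h1 : ∀ i ∈ (univ : Finset (Fin N)), 0 ≤ (1:ℝ) - σ i := by
      intro i _
      rcases hσ i with h2 | h2 <;> rw [h2] <;> norm_num
    have h2 := Finset.single_le_sum h1 (mem_univ i0)
    rw [hi0] at h2
    linarith
  have hS2 : ∑ i : Fin N, ((1:ℝ) - σ i) = (∑ i : Fin N, (1:ℝ)) - ∑ i : Fin N, σ i :=
    Finset.sum_sub_distrib _ _
  unfold H
  nlinarith [hQ, hS, hS2]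

/-- Theorem 3.1(3): every configuration different from the all-minus and all-plus ones
has stability level strictly smaller than `V_{-1} = max_k H(L^(k)) - H(-1)`. -/
theorem stability_level_lt (N : ℕ) (hN : 2 ≤ N) (J : ℕ → ℝ)
    (hpos : ∀ n, 1 ≤ n → 0 < J n) (hdec : ∀ n, 1 ≤ n → J (n + 1) < J n)
    (h : ℝ) (hh0 : 0 < h) (hh1 : h < ∑ n ∈ Finset.Icc 1 (N - 1), J n)
    (σ : Fin N → ℝ) (hσ : IsConfig σ)
    (hne₁ : σ ≠ fun _ => -1) (hne₂ : σ ≠ fun _ => 1) :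
    V N J h σ <
      (Finset.range (N + 1)).sup' (by simp) (fun k => H N J h (Lconf N k))
        - H N J h (fun _ => -1) := by
  classical
  have hG0 : 0 < GapBound N J h := GapBound_pos N J h hN hh1
  -- a site where σ is -1
  obtain ⟨i0, hi0⟩ : ∃ i, σ i = -1 := by
    obtain ⟨i, hi⟩ := Function.ne_iff.mp hne₂
    exact ⟨i, (hσ i).resolve_left hi⟩
  -- a site where σ is +1
  obtain ⟨pp, hpp⟩ : ∃ i, σ i = 1 := by
    obtain ⟨i, hi⟩ := Function.ne_iff.mp hne₁
    exact ⟨i, (hσ i).resolve_right hi⟩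
  have hNpos : 0 < N := by omega
  -- construct a path from σ to the all-plus configuration staying below H σ + GapBound
  have hexists : ∃ γ, IsPathFrom γ σ (fun _ => 1) ∧
      ∀ a ∈ γ, H N J h a < H N J h σ + GapBound N J h := by
    set top : Fin N := ⟨N - 1, by omega⟩ with htopdef
    rcases hσ top with htop | htop
    · -- bottom-up sweep
      set e : ℕ → Fin N := fun m => ⟨min m (N - 1), by omega⟩ with he
      set C : ℕ → Fin N → ℝ := fun m i => if (i : ℕ) < m then 1 else σ i with hC
      set r : ℕ → Fin N → ℝ := fun m i => if (i : ℕ) < m then (1:ℝ) else -1 with hr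
      have hval : ∀ m, m < N → ((e m : Fin N) : ℕ) = m := by
        intro m hm; simp [he]; omega
      have hCN1 : C N = fun _ => (1:ℝ) := by
        funext i; simp [hC, i.isLt]
      obtain ⟨γ, hpath, hbound⟩ := main_path N J h hpos hG0 σ hσ e C r top htop
        (by funext i; simp [hC])
        (by
          intro m hm
          simp only [hr]
          rw [if_neg (by have := hval m hm; omega)])
        (by
          intro m hm j
          by_cases hj : (j : ℕ) < m
          · exact Or.inl ⟨by simp [hC, hj], by simp [hr, hj]⟩
          · exact Or.inr ⟨by simp [hC, hj], by simp [hr, hj]⟩)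
        (by
          intro m hm hσm
          funext j
          by_cases hj : j = e m
          · subst hj
            rw [Function.update_self]
            simp [hC, hval m hm]
          · rw [Function.update_of_ne hj]
            have hvj : (j : ℕ) ≠ m := by
              intro hc; exact hj (Fin.ext (by rw [hval m hm, hc]))
            simp only [hC]
            by_cases h2 : (j : ℕ) < m
            · rw [if_pos (by omega), if_pos h2]
            · rw [if_neg (by omega), if_neg h2])
        (by
          intro m hm hσm
          funext j
          by_cases hvj : (j : ℕ) = m
          · have hj : j = e m := Fin.ext (by rw [hval m hm, hvj])
            simp only [hC]
            rw [if_pos (by omega), if_neg (by omega), hj, hσm]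
          · simp only [hC]
            by_cases h2 : (j : ℕ) < m
            · rw [if_pos (by omega), if_pos h2]
            · rw [if_neg (by omega), if_neg h2])
        (by rw [hCN1]; intro i; exact Or.inl rfl)
        (by
          intro m hm
          have hb := Bsum N J (e m)
          rw [hval m hm] at hb
          rw [← hb]
          refine Finset.sum_congr rfl (fun j _ => ?_)
          have hmin : m ⊓ (N - 1) = m := by omega
          simp [hr, hmin, hval m hm])
        (by
          intro m hm hσm hall
          constructor
          · simp only [hr]
            rw [if_neg (by have : (top : ℕ) = N - 1 := by rw [htopdef]
                           omega)]
          · intro hc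
            have h2 : σ (e m) = 1 := by rw [← hc]; exact htop
            rw [hσm] at h2
            norm_num at h2)
      refine ⟨γ, ?_, hbound⟩
      rw [← hCN1]
      exact hpath
    · -- top-down sweep
      set e : ℕ → Fin N := fun m => ⟨N - 1 - min m (N - 1), by omega⟩ with he
      set C : ℕ → Fin N → ℝ := fun m i => if N - m ≤ (i : ℕ) then 1 else σ i with hC
      set r : ℕ → Fin N → ℝ := fun m i => if N - m ≤ (i : ℕ) then (1:ℝ) else -1 with hr
      have hval : ∀ m, m < N → ((e m : Fin N) : ℕ) = N - 1 - m := by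
        intro m hm; simp [he]; omega
      have he0 : e 0 = top := Fin.ext (by simp [he, htopdef])
      have hCN1 : C N = fun _ => (1:ℝ) := by
        funext i; simp [hC]
      obtain ⟨γ, hpath, hbound⟩ := main_path N J h hpos hG0 σ hσ e C r pp hpp
        (by funext i; simp only [hC]; rw [if_neg (by have := i.isLt; omega)])
        (by intro m hm; simp only [hr]; rw [if_neg (by have := hval m hm; omega)])
        (by
          intro m hm j
          by_cases hj : N - m ≤ (j : ℕ)
          · exact Or.inl ⟨by simp only [hC]; rw [if_pos hj], by simp only [hr]; rw [if_pos hj]⟩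
          · exact Or.inr ⟨by simp only [hC]; rw [if_neg hj], by simp only [hr]; rw [if_neg hj]⟩)
        (by
          intro m hm hσm
          funext j
          by_cases hj : j = e m
          · subst hj
            rw [Function.update_self]
            simp only [hC]
            rw [if_pos (by have := hval m hm; omega)]
          · rw [Function.update_of_ne hj]
            have hvj : (j : ℕ) ≠ N - 1 - m := by
              intro hc; exact hj (Fin.ext (by rw [hval m hm, hc]))
            have hjN : (j : ℕ) < N := j.isLt
            simp only [hC]
            by_cases h2 : N - m ≤ (j : ℕ)
            · rw [if_pos (by omega), if_pos h2]
            · rw [if_neg (by omega), if_neg h2])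
        (by
          intro m hm hσm
          funext j
          have hjN : (j : ℕ) < N := j.isLt
          by_cases hvj : (j : ℕ) = N - 1 - m
          · have hj : j = e m := Fin.ext (by rw [hval m hm, hvj])
            simp only [hC]
            rw [if_pos (by omega), if_neg (by omega), hj, hσm]
          · simp only [hC]
            by_cases h2 : N - m ≤ (j : ℕ)
            · rw [if_pos (by omega), if_pos h2]
            · rw [if_neg (by omega), if_neg h2])
        (by rw [hCN1]; intro i; exact Or.inl rfl)
        (by
          intro m hm
          have hveq : ((e m : Fin N) : ℕ) = N - 1 - m := hval m hm
          have h1 : ∑ j ∈ univ.erase (e m), J (Nat.dist ((e m : Fin N) : ℕ) (j : ℕ)) * r m j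
              = -∑ j ∈ univ.erase (e m),
                  J (Nat.dist ((e m : Fin N) : ℕ) (j : ℕ)) *
                    (if (j : ℕ) < ((e m : Fin N) : ℕ) then (1:ℝ) else -1) := by
            rw [← Finset.sum_neg_distrib]
            refine Finset.sum_congr rfl (fun j hj => ?_)
            have hjne : j ≠ e m := (mem_erase.mp hj).1
            have hvne : (j : ℕ) ≠ N - 1 - m := by
              intro hc; exact hjne (Fin.ext (by rw [hveq, hc]))
            have hjN : (j : ℕ) < N := j.isLt
            have hmin : N - 1 - m ⊓ (N - 1) = N - 1 - m := by omega
            simp only [hr, hmin, hveq]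
            by_cases h2 : (j : ℕ) < N - 1 - m
            · rw [if_pos h2, if_neg (by omega)]; ring
            · rw [if_neg h2, if_pos (by omega)]; ring
          rw [h1, Bsum N J (e m), hveq]
          have h3 : N - 1 - (N - 1 - m) = m := by omega
          rw [h3]
          ring)
        (by
          intro m hm hσm hall
          have hm0 : m = 0 := by
            by_contra hc
            have h1 := hall 0 (by omega)
            rw [he0] at h1
            have h2 : (1:ℝ) = -1 := h1.symm.trans htop
            norm_num at h2
          subst hm0
          constructor
          · simp only [hr]
            rw [if_neg (by have := pp.isLt; omega)]
          · intro hc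
            rw [hc, hσm] at hpp
            norm_num at hpp)
      refine ⟨γ, ?_, hbound⟩
      rw [← hCN1]
      exact hpath
  -- assemble
  obtain ⟨γ, hpath, hbound⟩ := hexists
  set η : Fin N → ℝ := fun _ => 1 with hη
  set M : ℝ := (γ.map (H N J h)).foldr max (H N J h σ) with hM
  have hMlt : M < H N J h σ + GapBound N J h := by
    refine foldr_max_lt _ _ _ (by linarith) ?_
    intro a ha
    obtain ⟨τ, hτ, rfl⟩ := List.mem_map.mp ha
    exact hbound τ hτ
  have hPhile : Phi N J h σ η ≤ M := by
    apply csInf_le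
    · refine ⟨H N J h σ, ?_⟩
      rintro x ⟨γ', -, rfl⟩
      exact le_foldr_max _ _
    · exact ⟨γ, hpath, rfl⟩
  have hHη : H N J h η < H N J h σ := H_plus_lt N J h hpos hh0 σ hσ i0 hi0
  have hVle : sInf {x | ∃ η' : Fin N → ℝ, IsConfig η' ∧ H N J h η' < H N J h σ ∧
      x = Phi N J h σ η'} ≤ Phi N J h σ η := by
    apply csInf_le
    · refine ⟨min (H N J h σ) 0, ?_⟩
      rintro x ⟨η', hconf', hlt', rfl⟩
      rcases Set.eq_empty_or_nonempty {x | ∃ γ' : List (Fin N → ℝ), IsPathFrom γ' σ η' ∧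
          x = (γ'.map (H N J h)).foldr max (H N J h σ)} with hS | hS
      · unfold Phi
        rw [hS, Real.sInf_empty]
        exact min_le_right _ _
      · refine le_trans (min_le_left _ _) (le_csInf hS ?_)
        rintro y ⟨γ', -, rfl⟩
        exact le_foldr_max _ _
    · exact ⟨η, fun i => Or.inl rfl, hHη, rfl⟩
  have hfinal : V N J h σ < GapBound N J h := by
    unfold V
    linarith
  rw [Gamma_eq N J h]
  linarith
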